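/- Let p : ℝ → ℝ be a polynomial of degree at most 2, let a ≥ 0, Δx > 0, Δt ≥ 0 with ν = aΔt/Δx ∈ [0,1], and consider a uniform grid with interfaces x_{j+1/2} = x_{−1/2} + (j+1)Δx. Sample the data exactly: u_{j+1/2} = p(x_{j+1/2}) and ū_j = (1/Δx)∫_{x_{j−1/2}}^{x_{j+1/2}} p(x) dx. Then the Active Flux update formulas reproduce the exact solution of ∂_t u + a∂_x u = 0 with initial datum p after one time step: ν(3ν−2)u_{i−1/2} + 6ν(1−ν)ū_i + (1−ν)(1−3ν)u_{i+1/2} = p(x_{i+1/2} − aΔt), and ν²(ν−1)u_{i−3/2} + ν²(3−2ν)ū_{i−1} + ν(1−ν)u_{i−1/2} + (1−ν)²(1+2ν)ū_i − ν(1−ν)²u_{i+1/2} = (1/Δx)∫_{x_{i−1/2}}^{x_{i+1/2}} p(x − aΔt) dx. -/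

import Mathlib

/-- With data sampled exactly from a polynomial `p` of degree at most 2 on a
uniform grid (interface point values and cell averages), the explicit Active
Flux update formulas reproduce the exact solution `u(x,Δt) = p(x − aΔt)` of
the advection equation after one time step, both for the interface value and
the cell average. -/
theorem active_flux_exact_on_quadratics_one_step
    (p : Polynomial ℝ) (hp : p.degree ≤ 2)
    (a Δx Δt ν : ℝ) (ha : 0 ≤ a) (hΔx : 0 < Δx) (hΔt : 0 ≤ Δt)
    (hν : ν = a * Δt / Δx) (hν0 : 0 ≤ ν) (hν1 : ν ≤ 1)
    (xI : ℤ → ℝ) (xm : ℝ)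
    -- `xI j` is the interface `x_{j+1/2} = x_{−1/2} + (j+1)Δx`
    (hxI : ∀ j : ℤ, xI j = xm + (j + 1) * Δx)
    (u : ℤ → ℝ) (ubar : ℤ → ℝ)
    (hu : ∀ j : ℤ, u j = p.eval (xI j))
    (hubar : ∀ j : ℤ, ubar j = (1 / Δx) * ∫ x in (xI (j - 1))..(xI j), p.eval x)
    (i : ℤ) :
    ν * (3 * ν - 2) * u (i - 1) + 6 * ν * (1 - ν) * ubar i
        + (1 - ν) * (1 - 3 * ν) * u i = p.eval (xI i - a * Δt) ∧
    ν ^ 2 * (ν - 1) * u (i - 2) + ν ^ 2 * (3 - 2 * ν) * ubar (i - 1)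
        + ν * (1 - ν) * u (i - 1) + (1 - ν) ^ 2 * (1 + 2 * ν) * ubar i
        - ν * (1 - ν) ^ 2 * u i =
      (1 / Δx) * ∫ x in (xI (i - 1))..(xI i), p.eval (x - a * Δt) := by
  set c0 := p.coeff 0
  set c1 := p.coeff 1
  set c2 := p.coeff 2
  have hnd : p.natDegree < 3 :=
    lt_of_le_of_lt (Polynomial.natDegree_le_iff_degree_le.2 hp) (by norm_num)
  have he : ∀ x : ℝ, p.eval x = c0 + c1 * x + c2 * x ^ 2 := by
    intro x
    rw [Polynomial.eval_eq_sum_range' hnd x]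
    simp [Finset.sum_range_succ]
    try ring
  have hint : ∀ A B : ℝ, (∫ x in A..B, p.eval x)
      = c0 * (B - A) + c1 * (B ^ 2 - A ^ 2) / 2 + c2 * (B ^ 3 - A ^ 3) / 3 := by
    intro A B
    have h1 : IntervalIntegrable (fun x : ℝ => c0 + c1 * x) MeasureTheory.volume A B :=
      (by continuity : Continuous fun x : ℝ => c0 + c1 * x).intervalIntegrable A B
    have h2 : IntervalIntegrable (fun x : ℝ => c2 * x ^ 2) MeasureTheory.volume A B :=
      (by continuity : Continuous fun x : ℝ => c2 * x ^ 2).intervalIntegrable A B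
    have h3 : IntervalIntegrable (fun x : ℝ => (c0 : ℝ)) MeasureTheory.volume A B :=
      intervalIntegrable_const
    have h4 : IntervalIntegrable (fun x : ℝ => c1 * x) MeasureTheory.volume A B :=
      (by continuity : Continuous fun x : ℝ => c1 * x).intervalIntegrable A B
    calc (∫ x in A..B, p.eval x) = ∫ x in A..B, (c0 + c1 * x + c2 * x ^ 2) := by
          simp only [he]
      _ = (∫ x in A..B, (c0 + c1 * x)) + ∫ x in A..B, c2 * x ^ 2 :=
          intervalIntegral.integral_add h1 h2
      _ = ((∫ x in A..B, (c0 : ℝ)) + ∫ x in A..B, c1 * x) + ∫ x in A..B, c2 * x ^ 2 := by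
          rw [intervalIntegral.integral_add h3 h4]
      _ = c0 * (B - A) + c1 * (B ^ 2 - A ^ 2) / 2 + c2 * (B ^ 3 - A ^ 3) / 3 := by
          rw [intervalIntegral.integral_const, intervalIntegral.integral_const_mul,
            intervalIntegral.integral_const_mul, integral_id, integral_pow]
          push_cast
          rw [smul_eq_mul]
          ring
  have hubar' : ∀ j : ℤ, ubar j = (1 / Δx) * (c0 * (xI j - xI (j - 1))
      + c1 * ((xI j) ^ 2 - (xI (j - 1)) ^ 2) / 2
      + c2 * ((xI j) ^ 3 - (xI (j - 1)) ^ 3) / 3) := by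
    intro j; rw [hubar, hint]
  have hint2 : (∫ x in (xI (i - 1))..(xI i), p.eval (x - a * Δt))
      = c0 * ((xI i - a * Δt) - (xI (i - 1) - a * Δt))
      + c1 * ((xI i - a * Δt) ^ 2 - (xI (i - 1) - a * Δt) ^ 2) / 2
      + c2 * ((xI i - a * Δt) ^ 3 - (xI (i - 1) - a * Δt) ^ 3) / 3 := by
    rw [intervalIntegral.integral_comp_sub_right (fun x => p.eval x) (a * Δt), hint]
  have hs : a * Δt = ν * Δx := by
    rw [hν, div_mul_cancel₀ _ hΔx.ne']
  have hΔx' : (Δx : ℝ) ≠ 0 := ne_of_gt hΔx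
  constructor
  · simp only [hu, hubar', he, hxI, hs]
    push_cast
    field_simp
    ring
  · rw [hint2]
    simp only [hu, hubar', he, hxI, hs]
    push_cast
    field_simp
    ring
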